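/- Let M be a semigroup and let N = M ∪ {I} be the monoid obtained from M by adjoining a new identity element I. Let f : N → ℕ satisfy f(I) = 0 and f(b) ≤ f(a·b·c) for all a, b, c ∈ N (f is ≤_J-preserving). Consider finite strict L-chains in N of the form σ = (m_k <_L ⋯ <_L m_1 <_L m_0 = I), k ≥ 0; two chains are equal iff they have the same length and the same terms. For chains σ = (m_k <_L ⋯ <_L m_0 = I) and τ = (m'_{k'} <_L ⋯ <_L m'_0 = I), let r = max{ i ≤ min(k, k') | m_j = m'_j for all j < i, and m_i L m'_i } (r is well defined since i = 0 qualifies) and set σ ∧_L τ = m_r, the maximum L-point of agreement. Define D(σ, τ) = f(σ ∧_L τ) ∈ ℕ∞ if σ ≠ τ, and D(σ, σ) = 1 + sup_{n ∈ N} f(n) ∈ ℕ∞. Then for all such chains σ, τ, ρ: (L1) D(σ, τ) = D(τ, σ); (L2) D(τ, ρ) ≤ D(σ, σ); (L4) D(σ, ρ) ≥ min(D(σ, τ), D(τ, ρ)); and (L5) D(τ, ρ) = D(σ, σ) implies τ = ρ. -/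

import Mathlib

namespace Stmt9

variable {N : Type*} [Monoid N]

/-- `a ≤_L b`. -/
def lle (a b : N) : Prop := ∃ u, a = u * b

/-- `a L b`. -/
def lrel (a b : N) : Prop := lle a b ∧ lle b a

/-- `a <_L b`. -/
def llt (a b : N) : Prop := lle a b ∧ ¬ lle b a

/-- `IsLChain c` holds when `c = [m₀, m₁, …, m_k]` lists, from index `0` upwards,
the terms of a finite strict `L`-chain `m_k <_L ⋯ <_L m₁ <_L m₀ = 1`. -/
def IsLChain (c : List N) : Prop :=
  c.head? = some 1 ∧ List.Chain' (fun a b => llt b a) c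

/-- The index `r` of the maximum `L`-point of agreement of two chains:
the largest `i ≤ min(k, k')` such that `m_j = m'_j` for all `j < i` and
`m_i L m'_i`. -/
noncomputable def meetIdx (c c' : List N) : ℕ :=
  @Nat.findGreatest
    (fun i => i < c.length ∧ i < c'.length ∧
      (∀ j < i, c.getD j 1 = c'.getD j 1) ∧ lrel (c.getD i 1) (c'.getD i 1))
    (Classical.decPred _) (min c.length c'.length)

/-- The maximum `L`-point of agreement `σ ∧_L τ = m_r`. -/
noncomputable def wedge (c c' : List N) : N := c.getD (meetIdx c c') 1

lemma lle_refl (a : N) : lle a a := ⟨1, (one_mul a).symm⟩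

lemma lle_trans {a b c : N} (h1 : lle a b) (h2 : lle b c) : lle a c := by
  obtain ⟨u, rfl⟩ := h1; obtain ⟨v, rfl⟩ := h2
  exact ⟨u * v, (mul_assoc u v c).symm⟩

lemma lrel_refl (a : N) : lrel a a := ⟨lle_refl a, lle_refl a⟩

lemma lrel_symm {a b : N} (h : lrel a b) : lrel b a := ⟨h.2, h.1⟩

lemma lrel_trans {a b c : N} (h1 : lrel a b) (h2 : lrel b c) : lrel a c :=
  ⟨lle_trans h1.1 h2.1, lle_trans h2.2 h1.2⟩

lemma findGreatest_congr (P Q : ℕ → Prop) [DecidablePred P] [DecidablePred Q]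
    (h : ∀ i, P i ↔ Q i) : ∀ n, Nat.findGreatest P n = Nat.findGreatest Q n
  | 0 => rfl
  | n + 1 => by
    rw [Nat.findGreatest_succ, Nat.findGreatest_succ, findGreatest_congr P Q h n]
    by_cases hp : P (n + 1)
    · rw [if_pos hp, if_pos ((h _).mp hp)]
    · rw [if_neg hp, if_neg (fun hq => hp ((h _).mpr hq))]

lemma meetIdx_comm (c c' : List N) : meetIdx c c' = meetIdx c' c := by
  unfold meetIdx
  rw [Nat.min_comm]
  exact @findGreatest_congr _ _ (Classical.decPred _) (Classical.decPred _) (fun i => by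
    constructor
    · rintro ⟨h1, h2, h3, h4⟩
      exact ⟨h2, h1, fun j hj => (h3 j hj).symm, lrel_symm h4⟩
    · rintro ⟨h1, h2, h3, h4⟩
      exact ⟨h2, h1, fun j hj => (h3 j hj).symm, lrel_symm h4⟩) _

lemma IsLChain.ne_nil {c : List N} (hc : IsLChain c) : c ≠ [] := by
  intro h; rw [h] at hc; simp [IsLChain] at hc

lemma IsLChain.length_pos {c : List N} (hc : IsLChain c) : 0 < c.length :=
  List.length_pos_iff.mpr hc.ne_nil

lemma IsLChain.getD_zero {c : List N} (hc : IsLChain c) : c.getD 0 1 = 1 := by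
  cases c with
  | nil => exact absurd rfl hc.ne_nil
  | cons a t =>
    have h := hc.1
    simp only [List.head?_cons, Option.some_inj] at h
    simp [h]

lemma meetIdx_spec {c c' : List N} (hc : IsLChain c) (hc' : IsLChain c') :
    meetIdx c c' < c.length ∧ meetIdx c c' < c'.length ∧
    (∀ j < meetIdx c c', c.getD j 1 = c'.getD j 1) ∧
    lrel (c.getD (meetIdx c c') 1) (c'.getD (meetIdx c c') 1) := by
  have h0 : (fun i => i < c.length ∧ i < c'.length ∧
      (∀ j < i, c.getD j 1 = c'.getD j 1) ∧ lrel (c.getD i 1) (c'.getD i 1)) 0 :=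
    ⟨hc.length_pos, hc'.length_pos, fun j hj => absurd hj (Nat.not_lt_zero j),
      by rw [hc.getD_zero, hc'.getD_zero]; exact lrel_refl 1⟩
  unfold meetIdx
  exact @Nat.findGreatest_spec 0 (fun i => i < c.length ∧ i < c'.length ∧
      (∀ j < i, c.getD j 1 = c'.getD j 1) ∧ lrel (c.getD i 1) (c'.getD i 1))
    (Classical.decPred _) _ (Nat.zero_le _) h0

lemma le_meetIdx {c c' : List N} {m : ℕ}
    (h : m < c.length ∧ m < c'.length ∧
      (∀ j < m, c.getD j 1 = c'.getD j 1) ∧ lrel (c.getD m 1) (c'.getD m 1)) :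
    m ≤ meetIdx c c' := by
  unfold meetIdx
  exact @Nat.le_findGreatest m (fun i => i < c.length ∧ i < c'.length ∧
      (∀ j < i, c.getD j 1 = c'.getD j 1) ∧ lrel (c.getD i 1) (c'.getD i 1))
    (Classical.decPred _) _ (le_min h.1.le h.2.1.le) h

lemma chain_lle {c : List N} (hc : List.Chain' (fun a b => llt b a) c) :
    ∀ j, j < c.length → ∀ i, i ≤ j → lle (c.getD j 1) (c.getD i 1) := by
  intro j
  induction j with
  | zero =>
    intro _ i hi
    have : i = 0 := Nat.le_zero.mp hi
    subst this; exact lle_refl _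
  | succ j ih =>
    intro hj i hi
    rcases Nat.lt_or_ge i (j + 1) with h | h
    · have hstep : llt (c.getD (j + 1) 1) (c.getD j 1) := by
        rw [List.getD_eq_getElem _ _ hj, List.getD_eq_getElem _ _ (by omega)]
        have := List.isChain_iff_getElem.mp hc j (by omega)
        simpa using this
      exact lle_trans hstep.1 (ih (by omega) i (by omega))
    · have : i = j + 1 := by omega
      subst this; exact lle_refl _

end Stmt9

attribute [local instance] Classical.propDecidable

open Stmt9 in
/-- Product-free part of the Holonomy Theorem: for a `≤_J`-preserving
`f : M ∪ {I} → ℕ`, the function `D` on strict `L`-chains defined from `f` and the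
maximum `L`-point of agreement satisfies axioms (L1), (L2), (L4) and (L5). -/
theorem stmt_9 {M : Type*} [Semigroup M] (f : WithOne M → ℕ)
    (hfI : f 1 = 0)
    (hfJ : ∀ a b c : WithOne M, f b ≤ f (a * b * c)) :
    let D : List (WithOne M) → List (WithOne M) → ℕ∞ := fun σ τ =>
      if σ = τ then 1 + ⨆ n : WithOne M, (f n : ℕ∞) else (f (wedge σ τ) : ℕ∞)
    ∀ σ τ ρ : List (WithOne M), IsLChain σ → IsLChain τ → IsLChain ρ →
      D σ τ = D τ σ ∧
      D τ ρ ≤ D σ σ ∧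
      min (D σ τ) (D τ ρ) ≤ D σ ρ ∧
      (D τ ρ = D σ σ → τ = ρ) := by
  intro D σ τ ρ hσ hτ hρ
  -- basic facts about f
  have fmono : ∀ a b : WithOne M, lle a b → f b ≤ f a := by
    rintro a b ⟨u, rfl⟩
    simpa using hfJ u b 1
  have feq : ∀ a b : WithOne M, lrel a b → f a = f b := fun a b h =>
    le_antisymm (fmono b a h.2) (fmono a b h.1)
  have flt : ∀ x : WithOne M, (f x : ℕ∞) < 1 + ⨆ n : WithOne M, (f n : ℕ∞) := by
    intro x
    calc (f x : ℕ∞) < (f x : ℕ∞) + 1 := by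
            exact_mod_cast Nat.lt_succ_self (f x)
      _ ≤ (⨆ n : WithOne M, (f n : ℕ∞)) + 1 :=
            add_le_add_left (le_iSup (fun n : WithOne M => (f n : ℕ∞)) x) 1
      _ = 1 + ⨆ n : WithOne M, (f n : ℕ∞) := add_comm _ _
  have hDself : ∀ σ' : List (WithOne M), D σ' σ' = 1 + ⨆ n : WithOne M, (f n : ℕ∞) :=
    fun σ' => if_pos rfl
  have hDle : ∀ σ' τ' : List (WithOne M), D σ' τ' ≤ 1 + ⨆ n : WithOne M, (f n : ℕ∞) := by
    intro σ' τ'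
    by_cases h : σ' = τ'
    · rw [show D σ' τ' = _ from if_pos h]
    · rw [show D σ' τ' = _ from if_neg h]
      exact (flt _).le
  refine ⟨?_, ?_, ?_, ?_⟩
  · -- L1
    by_cases h : σ = τ
    · subst h; rfl
    · rw [show D σ τ = _ from if_neg h, show D τ σ = _ from if_neg (Ne.symm h)]
      unfold wedge
      rw [meetIdx_comm τ σ]
      exact_mod_cast feq _ _ ((meetIdx_spec hσ hτ).2.2.2)
  · -- L2
    rw [hDself]; exact hDle τ ρ
  · -- L4
    by_cases hσρ : σ = ρ
    · rw [show D σ ρ = _ from if_pos hσρ]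
      exact le_trans (min_le_left _ _) (hDle σ τ)
    · by_cases hστ : σ = τ
      · subst hστ; exact min_le_right _ _
      · by_cases hτρ : τ = ρ
        · subst hτρ; exact min_le_left _ _
        · rw [show D σ τ = _ from if_neg hστ, show D τ ρ = _ from if_neg hτρ,
            show D σ ρ = _ from if_neg hσρ]
          set r1 := meetIdx σ τ with hr1
          set r2 := meetIdx τ ρ with hr2
          obtain ⟨h1σ, h1τ, h1j, h1r⟩ := meetIdx_spec hσ hτ
          obtain ⟨h2τ, h2ρ, h2j, h2r⟩ := meetIdx_spec hτ hρ
          obtain ⟨h3σ, h3ρ, h3j, h3r⟩ := meetIdx_spec hσ hρ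
          set s := min r1 r2 with hs
          have hστs : lrel (σ.getD s 1) (τ.getD s 1) := by
            rcases Nat.lt_or_ge s r1 with h | h
            · rw [h1j s h]; exact lrel_refl _
            · have : s = r1 := le_antisymm (min_le_left _ _) h
              rw [this]; exact h1r
          have hτρs : lrel (τ.getD s 1) (ρ.getD s 1) := by
            rcases Nat.lt_or_ge s r2 with h | h
            · rw [h2j s h]; exact lrel_refl _
            · have : s = r2 := le_antisymm (min_le_right _ _) h
              rw [this]; exact h2r
          have hPs : s < σ.length ∧ s < ρ.length ∧
              (∀ j < s, σ.getD j 1 = ρ.getD j 1) ∧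
              lrel (σ.getD s 1) (ρ.getD s 1) := by
            refine ⟨lt_of_le_of_lt (min_le_left _ _) h1σ,
              lt_of_le_of_lt (min_le_right _ _) h2ρ, ?_, lrel_trans hστs hτρs⟩
            intro j hj
            rw [h1j j (lt_of_lt_of_le hj (min_le_left _ _)),
              h2j j (lt_of_lt_of_le hj (min_le_right _ _))]
          have hsr : s ≤ meetIdx σ ρ := le_meetIdx hPs
          have hchain : f (σ.getD s 1) ≤ f (σ.getD (meetIdx σ ρ) 1) :=
            fmono _ _ (chain_lle hσ.2 (meetIdx σ ρ) h3σ s hsr)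
          have key : f (wedge σ τ) ≤ f (wedge σ ρ) ∨ f (wedge τ ρ) ≤ f (wedge σ ρ) := by
            rcases Nat.le_total r1 r2 with h | h
            · left
              have hsr1 : s = r1 := min_eq_left h
              calc f (wedge σ τ) = f (σ.getD s 1) := by rw [hsr1]; rfl
                _ ≤ f (σ.getD (meetIdx σ ρ) 1) := hchain
                _ = f (wedge σ ρ) := rfl
            · right
              have hsr2 : s = r2 := min_eq_right h
              calc f (wedge τ ρ) = f (τ.getD s 1) := by rw [hsr2]; rfl
                _ = f (σ.getD s 1) := (feq _ _ hστs).symm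
                _ ≤ f (σ.getD (meetIdx σ ρ) 1) := hchain
                _ = f (wedge σ ρ) := rfl
          rcases key with h | h
          · exact le_trans (min_le_left _ _) (by exact_mod_cast h)
          · exact le_trans (min_le_right _ _) (by exact_mod_cast h)
  · -- L5
    intro h
    by_contra hτρ
    rw [show D τ ρ = _ from if_neg hτρ, hDself] at h
    exact absurd h (ne_of_lt (flt _))
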